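/- Fix w_1, …, w_K ∈ ℝ^d, b ∈ ℝ^K, a label k ∈ {1,…,K}, and a feature h ∈ ℝ^d. Then for all real c_1, c_2 > 0, the per-sample BCE loss is lower bounded by L_bce(h, k) ≥ (1/(1+c_1)) · (−⟨w_k, h⟩ + b_k) + (1/(1+c_2)) · Σ_{j≠k} (⟨w_j, h⟩ − b_j) + C, where C = (c_1/(1+c_1)) · log((1+c_1)/c_1) + log(1+c_1)/(1+c_1) + ((K−1)/(1+c_2)) · [c_2 · log((1+c_2)/c_2) + log(1+c_2)]. -/
import Mathlib


open scoped BigOperators RealInnerProductSpace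

/-- Per-sample binary cross-entropy (BCE) loss of a feature `x` with label `k`,
for classifier vectors `w` and biases `b`. -/
noncomputable def Lbce {d K : ℕ} (w : Fin K → EuclideanSpace ℝ (Fin d))
    (b : Fin K → ℝ) (k : Fin K) (x : EuclideanSpace ℝ (Fin d)) : ℝ :=
  Real.log (1 + Real.exp (-⟪w k, x⟫ + b k)) +
    ∑ j ∈ Finset.univ.erase k, Real.log (1 + Real.exp (⟪w j, x⟫ - b j))

/-- The constant `C` appearing in the BCE lower bound. -/
noncomputable def Cconst (K : ℕ) (c1 c2 : ℝ) : ℝ :=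
  c1 / (1 + c1) * Real.log ((1 + c1) / c1) + Real.log (1 + c1) / (1 + c1) +
    ((K : ℝ) - 1) / (1 + c2) *
      (c2 * Real.log ((1 + c2) / c2) + Real.log (1 + c2))

lemma key_log_bound (c t : ℝ) (hc : 0 < c) :
    t / (1 + c) + (c * Real.log ((1 + c) / c) + Real.log (1 + c)) / (1 + c)
      ≤ Real.log (1 + Real.exp t) := by
  have h1c : (0:ℝ) < 1 + c := by linarith
  have hw1 : (0:ℝ) ≤ c / (1 + c) := by positivity
  have hw2 : (0:ℝ) ≤ 1 / (1 + c) := by positivity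
  have hp1 : (0:ℝ) < (1 + c) / c := by positivity
  have hp2 : (0:ℝ) < (1 + c) * Real.exp t := by positivity
  have hsum : c / (1 + c) + 1 / (1 + c) = 1 := by field_simp; ring
  have hg := Real.geom_mean_le_arith_mean2_weighted hw1 hw2 hp1.le hp2.le hsum
  have harith : c / (1 + c) * ((1 + c) / c) + 1 / (1 + c) * ((1 + c) * Real.exp t)
      = 1 + Real.exp t := by field_simp
  rw [harith] at hg
  have hpos : (0:ℝ) < ((1 + c) / c) ^ (c / (1 + c)) * ((1 + c) * Real.exp t) ^ (1 / (1 + c)) := by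
    positivity
  have hlog := Real.log_le_log hpos hg
  rw [Real.log_mul (by positivity) (by positivity), Real.log_rpow hp1, Real.log_rpow hp2,
    Real.log_mul h1c.ne' (Real.exp_ne_zero t), Real.log_exp] at hlog
  have heq : t / (1 + c) + (c * Real.log ((1 + c) / c) + Real.log (1 + c)) / (1 + c)
      = c / (1 + c) * Real.log ((1 + c) / c) + 1 / (1 + c) * (Real.log (1 + c) + t) := by
    ring
  linarith [hlog, heq ▸ le_refl (t / (1 + c) + (c * Real.log ((1 + c) / c) + Real.log (1 + c)) / (1 + c))]

/-- **Lower bound for the per-sample BCE loss.**  For all `c₁, c₂ > 0`,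
`L_bce(h,k) ≥ (−⟨w_k,h⟩ + b_k)/(1+c₁) + (∑_{j≠k} (⟨w_j,h⟩ − b_j))/(1+c₂) + C`. -/
theorem Lbce_lower_bound {d K : ℕ} (hK : 2 ≤ K)
    (w : Fin K → EuclideanSpace ℝ (Fin d)) (b : Fin K → ℝ) (k : Fin K)
    (x : EuclideanSpace ℝ (Fin d)) (c1 c2 : ℝ) (hc1 : 0 < c1) (hc2 : 0 < c2) :
    (1 / (1 + c1)) * (-⟪w k, x⟫ + b k) +
        (1 / (1 + c2)) * ∑ j ∈ Finset.univ.erase k, (⟪w j, x⟫ - b j) +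
        Cconst K c1 c2 ≤
      Lbce w b k x := by
  have h1 := key_log_bound c1 (-⟪w k, x⟫ + b k) hc1
  have hsum : ∑ j ∈ Finset.univ.erase k,
      ((⟪w j, x⟫ - b j) / (1 + c2)
        + (c2 * Real.log ((1 + c2) / c2) + Real.log (1 + c2)) / (1 + c2))
      ≤ ∑ j ∈ Finset.univ.erase k, Real.log (1 + Real.exp (⟪w j, x⟫ - b j)) :=
    Finset.sum_le_sum fun j _ => key_log_bound c2 _ hc2
  have hcard : ((Finset.univ.erase k).card : ℝ) = (K : ℝ) - 1 := by
    rw [Finset.card_erase_of_mem (Finset.mem_univ k), Finset.card_univ, Fintype.card_fin,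
      Nat.cast_sub (by omega), Nat.cast_one]
  rw [Finset.sum_add_distrib, Finset.sum_const, nsmul_eq_mul, hcard,
    ← Finset.sum_div] at hsum
  unfold Lbce Cconst
  have h1c2 : (0:ℝ) < 1 + c2 := by linarith
  have e1 : (1 / (1 + c2)) * ∑ j ∈ Finset.univ.erase k, (⟪w j, x⟫ - b j)
      = (∑ j ∈ Finset.univ.erase k, (⟪w j, x⟫ - b j)) / (1 + c2) := by ring
  have e2 : ((K : ℝ) - 1) / (1 + c2) * (c2 * Real.log ((1 + c2) / c2) + Real.log (1 + c2))
      = ((K : ℝ) - 1) * ((c2 * Real.log ((1 + c2) / c2) + Real.log (1 + c2)) / (1 + c2)) := by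
    ring
  have e3 : (1 / (1 + c1)) * (-⟪w k, x⟫ + b k) = (-⟪w k, x⟫ + b k) / (1 + c1) := by ring
  have e4 : c1 / (1 + c1) * Real.log ((1 + c1) / c1) + Real.log (1 + c1) / (1 + c1)
      = (c1 * Real.log ((1 + c1) / c1) + Real.log (1 + c1)) / (1 + c1) := by ring
  linarith [hsum, h1]
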